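/- Fix θ̄ ∈ ℝ. Assume: (i) for every x ∈ X and every i : Fin (K+1), the map θ ↦ h θ x i has derivative h'(x,i) at θ̄; write S'(x) := ∑_{i : Fin K} h'(x, i.castSucc) and u'(x) := h'(x, Fin.last K); (ii) x ↦ S θ̄ x and x ↦ u θ̄ x are integrable with Z' := ∫ S θ̄ x dμ > 0 and Z := ∫ u θ̄ x dμ > 0; (iii) x ↦ S'(x) is integrable; (iv) differentiation under the integral sign is valid for both objectives, i.e. the map θ ↦ ∫ (S θ̄ x / Z') · log(S θ x) dμ has derivative at θ̄ equal to ∫ (S θ̄ x / Z') · (S'(x) / S θ̄ x) dμ, and the map θ ↦ ∫ (u θ̄ x / Z) · (− log(u θ x)) dμ has derivative at θ̄ equal to ∫ (u θ̄ x / Z) · (− u'(x) / u θ̄ x) dμ. Then the derivative at θ̄ of θ ↦ ∫ (S θ̄ x / Z') · log(S θ x) dμ equals (Z / Z') times the derivative at θ̄ of θ ↦ ∫ (u θ̄ x / Z) · (− log(u θ x)) dμ. (In particular, since Z/Z' > 0, the two gradients are positive scalar multiples of each other.) -/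

import Mathlib

open MeasureTheory

/-- Proposition 1 of the paper: for a parametrized softmax family
`h : ℝ → X → Fin (K+1) → ℝ` (positive coordinates summing to one), with
`S θ x = ∑_{i : Fin K} h θ x i.castSucc`, `u θ x = h θ x (Fin.last K)`,
pointwise derivatives `h'` at `θ̄` (so `S' x = ∑_{i : Fin K} h' x i.castSucc`,
`u' x = h' x (Fin.last K)`), normalizers `Z' = ∫ S θ̄ x dμ > 0` and
`Z = ∫ u θ̄ x dμ > 0`, and validity of differentiation under the integral sign
for both objectives, the derivative at `θ̄` of
`θ ↦ ∫ (S θ̄ x / Z') * log (S θ x) dμ` equals `Z / Z'` times the derivative at `θ̄`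
of `θ ↦ ∫ (u θ̄ x / Z) * (-log (u θ x)) dμ`. -/
theorem eow_softmax_frozen_gradient_proportionality
    {X : Type*} [MeasurableSpace X] (μ : Measure X) [SigmaFinite μ]
    (K : ℕ) (hK : 1 ≤ K)
    (h : ℝ → X → Fin (K + 1) → ℝ)
    (hpos : ∀ θ x i, 0 < h θ x i)
    (hsum1 : ∀ θ x, ∑ i : Fin (K + 1), h θ x i = 1)
    (S u : ℝ → X → ℝ)
    (hS : ∀ θ x, S θ x = ∑ i : Fin K, h θ x i.castSucc)
    (hu : ∀ θ x, u θ x = h θ x (Fin.last K))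
    (θbar : ℝ) (h' : X → Fin (K + 1) → ℝ)
    -- (i) pointwise derivatives at θ̄
    (hderiv : ∀ x i, HasDerivAt (fun θ => h θ x i) (h' x i) θbar)
    (S' u' : X → ℝ)
    (hS' : ∀ x, S' x = ∑ i : Fin K, h' x i.castSucc)
    (hu' : ∀ x, u' x = h' x (Fin.last K))
    -- (ii) integrability and positive normalizers at θ̄
    (hSint : Integrable (fun x => S θbar x) μ)
    (huint : Integrable (fun x => u θbar x) μ)
    (Z' Z : ℝ)
    (hZ' : Z' = ∫ x, S θbar x ∂μ) (hZ'pos : 0 < Z')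
    (hZ : Z = ∫ x, u θbar x ∂μ) (hZpos : 0 < Z)
    -- (iii) integrability of S'
    (hS'int : Integrable S' μ)
    -- (iv) differentiation under the integral sign for both objectives
    (hd1 : HasDerivAt (fun θ => ∫ x, (S θbar x / Z') * Real.log (S θ x) ∂μ)
      (∫ x, (S θbar x / Z') * (S' x / S θbar x) ∂μ) θbar)
    (hd2 : HasDerivAt (fun θ => ∫ x, (u θbar x / Z) * (-Real.log (u θ x)) ∂μ)
      (∫ x, (u θbar x / Z) * (-u' x / u θbar x) ∂μ) θbar) :
    deriv (fun θ => ∫ x, (S θbar x / Z') * Real.log (S θ x) ∂μ) θbar =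
      (Z / Z') *
        deriv (fun θ => ∫ x, (u θbar x / Z) * (-Real.log (u θ x)) ∂μ) θbar := by
  -- pointwise: S' x = - u' x, since ∑ h' x i = 0 (derivative of constant 1)
  have hsum0 : ∀ x, ∑ i : Fin (K + 1), h' x i = 0 := by
    intro x
    have hconst : HasDerivAt (fun θ => ∑ i : Fin (K + 1), h θ x i)
        (∑ i : Fin (K + 1), h' x i) θbar := HasDerivAt.fun_sum fun i _ => hderiv x i
    have hconst' : HasDerivAt (fun _ : ℝ => (1 : ℝ))
        (∑ i : Fin (K + 1), h' x i) θbar := by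
      refine hconst.congr_of_eventuallyEq ?_
      filter_upwards with θ using (hsum1 θ x).symm
    have := (hasDerivAt_const θbar (1 : ℝ)).unique hconst'
    simpa using this.symm
  have hSu' : ∀ x, S' x = -u' x := by
    intro x
    have := hsum0 x
    rw [Fin.sum_univ_castSucc] at this
    rw [hS', hu']
    linarith
  have hSpos : ∀ x, 0 < S θbar x := by
    intro x
    rw [hS]
    exact Finset.sum_pos (fun i _ => hpos _ _ _) ⟨⟨0, hK⟩, Finset.mem_univ _⟩
  have hupos : ∀ x, 0 < u θbar x := fun x => by rw [hu]; exact hpos _ _ _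
  have e1 : (fun x => (S θbar x / Z') * (S' x / S θbar x)) =
      fun x => S' x / Z' := by
    funext x
    field_simp [(hSpos x).ne']
  have e2 : (fun x => (u θbar x / Z) * (-u' x / u θbar x)) =
      fun x => -u' x / Z := by
    funext x
    field_simp [(hupos x).ne']
  rw [hd1.deriv, hd2.deriv, e1, e2]
  have hi1 : ∫ x, S' x / Z' ∂μ = (∫ x, S' x ∂μ) / Z' := integral_div _ _
  have hi2 : ∫ x, -u' x / Z ∂μ = (∫ x, -u' x ∂μ) / Z := integral_div _ _
  rw [hi1, hi2]
  have : ∫ x, S' x ∂μ = ∫ x, -u' x ∂μ := by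
    congr 1; funext x; exact hSu' x
  rw [this]
  field_simp
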